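/- RDP bound for the Gaussian mechanism: for real means m₁, m₂ with |m₁ − m₂| ≤ r, variance σ² > 0, and α > 1, the Rényi divergence of order α between N(m₁, σ²) and N(m₂, σ²) satisfies D^α(N(m₁,σ²) ‖ N(m₂,σ²)) = α(m₁−m₂)²/(2σ²) ≤ α r²/(2σ²). -/

import Mathlib

open MeasureTheory ProbabilityTheory

/-- Rényi divergence of order `α` between measures on `ℝ`,
`D^α(μ‖ν) = (1/(α−1)) log ∫ (dμ/dν)^α dν`. -/
noncomputable def renyiDivM (α : ℝ) (μ ν : Measure ℝ) : ℝ :=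
  (1 / (α - 1)) * Real.log (∫ x, ((μ.rnDeriv ν) x).toReal ^ α ∂ν)

open Real in
open scoped ENNReal NNReal in
theorem renyi_gaussian_eq (m₁ m₂ : ℝ) (v : NNReal) (hv : v ≠ 0)
    (α : ℝ) (hα : 1 < α) :
    renyiDivM α (gaussianReal m₁ v) (gaussianReal m₂ v) =
        α * (m₁ - m₂) ^ 2 / (2 * (v : ℝ)) := by
  have hv0 : (0:ℝ) < v := lt_of_le_of_ne v.2 (by exact_mod_cast (Ne.symm hv))
  set f₁ := gaussianPDFReal m₁ v
  set f₂ := gaussianPDFReal m₂ v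
  set K : ℝ := α * (α - 1) * (m₁ - m₂)^2 / (2 * v)
  set c : ℝ := α * m₁ - (α - 1) * m₂
  have hf₂pos : ∀ x, 0 < f₂ x := fun x => gaussianPDFReal_pos _ _ _ hv
  have hf₁pos : ∀ x, 0 < f₁ x := fun x => gaussianPDFReal_pos _ _ _ hv
  -- rnDeriv
  have hrn : (gaussianReal m₁ v).rnDeriv (gaussianReal m₂ v)
      =ᵐ[volume] fun x ↦ (gaussianPDF m₂ v x)⁻¹ * gaussianPDF m₁ v x := by
    rw [gaussianReal_of_var_ne_zero m₂ hv]
    have h1 := Measure.rnDeriv_withDensity_right (gaussianReal m₁ v) volume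
      (measurable_gaussianPDF m₂ v).aemeasurable
      (ae_of_all _ fun x => (gaussianPDF_pos _ hv x).ne')
      (ae_of_all _ fun x => ENNReal.ofReal_ne_top)
    filter_upwards [h1, rnDeriv_gaussianReal m₁ v] with x hx hx2
    rw [hx, hx2]
  have habs : gaussianReal m₂ v ≪ volume := gaussianReal_absolutelyContinuous m₂ hv
  have hI : (∫ x, ((gaussianReal m₁ v).rnDeriv (gaussianReal m₂ v) x).toReal ^ α
      ∂(gaussianReal m₂ v)) = Real.exp K := by
    calc (∫ x, ((gaussianReal m₁ v).rnDeriv (gaussianReal m₂ v) x).toReal ^ α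
        ∂(gaussianReal m₂ v))
        = ∫ x, (f₁ x / f₂ x) ^ α ∂(gaussianReal m₂ v) := by
          refine integral_congr_ae ?_
          have := habs.ae_eq hrn
          filter_upwards [this] with x hx
          rw [hx]
          simp [gaussianPDF, ENNReal.toReal_inv, ENNReal.toReal_ofReal (hf₁pos x).le,
            ENNReal.toReal_ofReal (hf₂pos x).le, div_eq_inv_mul]
          rw [ENNReal.toReal_ofReal (hf₁pos x).le, ENNReal.toReal_ofReal (hf₂pos x).le]
      _ = ∫ x, f₂ x * ((f₁ x / f₂ x) ^ α) := by
          rw [gaussianReal_of_var_ne_zero m₂ hv]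
          have : gaussianPDF m₂ v = fun x => ((Real.toNNReal (f₂ x) : ℝ≥0∞)) := by
            ext x; simp [gaussianPDF, ENNReal.ofReal]; rfl
          rw [this, integral_withDensity_eq_integral_smul
            ((measurable_gaussianPDFReal m₂ v).real_toNNReal) _]
          refine integral_congr_ae (ae_of_all _ fun x => ?_)
          simp [NNReal.smul_def, Real.coe_toNNReal _ (hf₂pos x).le]
          left; exact max_eq_left (hf₂pos x).le
      _ = ∫ x, Real.exp K * gaussianPDFReal c v x := by
          refine integral_congr_ae (ae_of_all _ fun x => ?_)
          have hratio : f₁ x / f₂ x =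
              Real.exp ((-(x - m₁)^2/(2*(v:ℝ))) - (-(x - m₂)^2/(2*(v:ℝ)))) := by
            rw [Real.exp_sub]
            simp only [f₁, f₂, gaussianPDFReal]
            rw [mul_div_mul_left _ _ (by positivity)]
          show f₂ x * (f₁ x / f₂ x) ^ α = Real.exp K * gaussianPDFReal c v x
          rw [hratio, ← Real.exp_mul]
          simp only [f₂, gaussianPDFReal, c]
          have key : Real.exp ((-(x - m₁) ^ 2 / (2 * (v:ℝ)) - -(x - m₂) ^ 2 / (2 * (v:ℝ))) * α)
              = Real.exp K * Real.exp (-(x - (α * m₁ - (α - 1) * m₂)) ^ 2 / (2 * (v:ℝ)))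
                * (Real.exp (-(x - m₂) ^ 2 / (2 * (v:ℝ))))⁻¹ := by
            rw [← Real.exp_add, ← Real.exp_neg, ← Real.exp_add]
            congr 1
            simp only [K]
            field_simp
            ring
          rw [key]
          field_simp
      _ = Real.exp K := by
          rw [integral_const_mul, integral_gaussianPDFReal_eq_one c hv, mul_one]
  rw [show renyiDivM α (gaussianReal m₁ v) (gaussianReal m₂ v) = (1 / (α - 1)) * Real.log (∫ x, (((gaussianReal m₁ v).rnDeriv (gaussianReal m₂ v)) x).toReal ^ α ∂(gaussianReal m₂ v)) from rfl, hI, Real.log_exp]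
  have hα1 : α - 1 ≠ 0 := sub_ne_zero.mpr hα.ne'
  have hK : K = (α - 1) * (α * (m₁ - m₂) ^ 2 / (2 * (v:ℝ))) := by
    simp only [K]; field_simp
  rw [hK, ← mul_assoc, one_div, inv_mul_cancel₀ hα1, one_mul]

/-- RDP bound for the Gaussian mechanism: for means at distance at most `r`
and common variance `v > 0`,
`D^α(N(m₁,v) ‖ N(m₂,v)) = α (m₁−m₂)²/(2v) ≤ α r²/(2v)` for every `α > 1`. -/
theorem renyi_gaussian (m₁ m₂ r : ℝ) (v : NNReal) (hv : v ≠ 0)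
    (hr : |m₁ - m₂| ≤ r) (α : ℝ) (hα : 1 < α) :
    renyiDivM α (gaussianReal m₁ v) (gaussianReal m₂ v) =
        α * (m₁ - m₂) ^ 2 / (2 * (v : ℝ)) ∧
      renyiDivM α (gaussianReal m₁ v) (gaussianReal m₂ v) ≤
        α * r ^ 2 / (2 * (v : ℝ)) := by
  have heq := renyi_gaussian_eq m₁ m₂ v hv α hα
  refine ⟨heq, ?_⟩
  rw [heq]
  have hv0 : (0:ℝ) < v := lt_of_le_of_ne v.2 (by exact_mod_cast (Ne.symm hv))
  have hsq : (m₁ - m₂) ^ 2 ≤ r ^ 2 := sq_le_sq' (abs_le.mp hr).1 (abs_le.mp hr).2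
  gcongr
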